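/- Let ℓ : [0,∞) → [0,∞) be differentiable, nondecreasing, and concave, and let ω ∈ [0,1). Then for all vectors u, θ, g ∈ ℝ^d, writing δ = u + (1−ω)g, one has ℓ( ω‖δ−u‖² + (1−ω)‖δ−θ‖² ) − ℓ( (1−ω)‖u−θ‖² ) ≤ (1−ω)² ℓ'( (1−ω)‖u−θ‖² ) ( ‖u+g−θ‖² − ‖u−θ‖² ). -/

import Mathlib

open Set

lemma concave_tangent_line (ℓ : ℝ → ℝ)
    (hℓ_diff : DifferentiableOn ℝ ℓ (Ici 0))
    (hℓ_concave : ConcaveOn ℝ (Ici 0) ℓ)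
    (a x : ℝ) (ha : (0:ℝ) ≤ a) (hx : (0:ℝ) ≤ x) :
    ℓ x - ℓ a ≤ derivWithin ℓ (Ici 0) a * (x - a) := by
  rcases lt_trichotomy a x with h | h | h
  · have hs := hℓ_concave.slope_le_derivWithin ha hx h (hℓ_diff a ha)
    rw [slope_def_field] at hs
    have hxa : (0:ℝ) < x - a := by linarith
    calc ℓ x - ℓ a = (ℓ x - ℓ a) / (x - a) * (x - a) := by field_simp
      _ ≤ derivWithin ℓ (Ici 0) a * (x - a) :=
          mul_le_mul_of_nonneg_right hs hxa.le
  · simp [h]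
  · have hs := hℓ_concave.derivWithin_le_slope hx ha h (hℓ_diff a ha)
    rw [slope_def_field] at hs
    have hxa : (0:ℝ) < a - x := by linarith
    have := mul_le_mul_of_nonneg_right hs hxa.le
    rw [div_mul_cancel₀ _ hxa.ne'] at this
    nlinarith

/-- (Lemma 6 of Marchand–Strawderman.) For differentiable, nondecreasing,
concave `ℓ : [0,∞) → [0,∞)` and `ω ∈ [0,1)`, with `δ = u + (1-ω)g`,
`ℓ(ω‖δ-u‖² + (1-ω)‖δ-θ‖²) - ℓ((1-ω)‖u-θ‖²) ≤ (1-ω)² ℓ'((1-ω)‖u-θ‖²)(‖u+g-θ‖² - ‖u-θ‖²)`. -/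
theorem stmt4 (d : ℕ)
    (ℓ : ℝ → ℝ) (hℓ_nonneg : ∀ t, 0 ≤ t → 0 ≤ ℓ t)
    (hℓ_diff : DifferentiableOn ℝ ℓ (Ici 0))
    (hℓ_mono : MonotoneOn ℓ (Ici 0))
    (hℓ_concave : ConcaveOn ℝ (Ici 0) ℓ)
    (ω : ℝ) (hω0 : 0 ≤ ω) (hω1 : ω < 1)
    (u θ g : EuclideanSpace ℝ (Fin d)) :
    ℓ (ω * ‖(u + (1 - ω) • g) - u‖ ^ 2 + (1 - ω) * ‖(u + (1 - ω) • g) - θ‖ ^ 2)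
        - ℓ ((1 - ω) * ‖u - θ‖ ^ 2)
      ≤ (1 - ω) ^ 2 * derivWithin ℓ (Ici 0) ((1 - ω) * ‖u - θ‖ ^ 2)
          * (‖u + g - θ‖ ^ 2 - ‖u - θ‖ ^ 2) := by
  have hω : (0:ℝ) < 1 - ω := by linarith
  set A := ω * ‖(u + (1 - ω) • g) - u‖ ^ 2 + (1 - ω) * ‖(u + (1 - ω) • g) - θ‖ ^ 2 with hA
  set a := (1 - ω) * ‖u - θ‖ ^ 2 with ha
  have h1 : (u + (1 - ω) • g) - u = (1 - ω) • g := by abel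
  have h2 : (u + (1 - ω) • g) - θ = (u - θ) + (1 - ω) • g := by abel
  have h3 : u + g - θ = (u - θ) + g := by abel
  have e1 : ‖(u - θ) + (1 - ω) • g‖ ^ 2
      = ‖u - θ‖ ^ 2 + 2 * (1 - ω) * inner ℝ (u - θ) g + (1 - ω) ^ 2 * ‖g‖ ^ 2 := by
    rw [@norm_add_sq_real, real_inner_smul_right, norm_smul]
    rw [Real.norm_eq_abs, abs_of_pos hω]
    ring
  have e2 : ‖(u - θ) + g‖ ^ 2 = ‖u - θ‖ ^ 2 + 2 * inner ℝ (u - θ) g + ‖g‖ ^ 2 := by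
    rw [@norm_add_sq_real]
  have e3 : ‖(1 - ω) • g‖ ^ 2 = (1 - ω) ^ 2 * ‖g‖ ^ 2 := by
    rw [norm_smul, Real.norm_eq_abs, abs_of_pos hω]; ring
  have key : A - a = (1 - ω) ^ 2 * (‖u + g - θ‖ ^ 2 - ‖u - θ‖ ^ 2) := by
    rw [hA, ha, h1, h2, h3, e1, e2, e3]; ring
  have hA0 : 0 ≤ A := by
    rw [hA]
    have := sq_nonneg ‖(u + (1 - ω) • g) - u‖
    have := sq_nonneg ‖(u + (1 - ω) • g) - θ‖
    positivity
  have ha0 : 0 ≤ a := by rw [ha]; positivity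
  have := concave_tangent_line ℓ hℓ_diff hℓ_concave a A ha0 hA0
  calc ℓ A - ℓ a ≤ derivWithin ℓ (Ici 0) a * (A - a) := this
    _ = (1 - ω) ^ 2 * derivWithin ℓ (Ici 0) a * (‖u + g - θ‖ ^ 2 - ‖u - θ‖ ^ 2) := by
        rw [key]; ring
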